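/- Let X ⊂ R^d be a collection of vectors each having at most n non-zero coordinates. Then the doubling dimension of X (with Euclidean metric) is at most Cn + n·log₂ d for some universal constant C. -/

import Mathlib

open Metric Set

noncomputable section

namespace Stmt7Aux

variable {d : ℕ}

/-- The submodule of vectors supported on `S`. -/
def flat (S : Finset (Fin d)) : Submodule ℝ (EuclideanSpace ℝ (Fin d)) where
  carrier := {u | ∀ i ∉ S, u i = 0}
  add_mem' := fun {u v} hu hv i hi => by
    simp [PiLp.add_apply, hu i hi, hv i hi]
  zero_mem' := fun i _ => rfl
  smul_mem' := fun c u hu i hi => by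
    simp [PiLp.smul_apply, hu i hi]

lemma mem_flat {S : Finset (Fin d)} {u : EuclideanSpace ℝ (Fin d)} :
    u ∈ flat S ↔ ∀ i ∉ S, u i = 0 := Iff.rfl

lemma finrank_flat_le (S : Finset (Fin d)) :
    Module.finrank ℝ (flat S) ≤ S.card := by
  classical
  let φ : flat S →ₗ[ℝ] (↥S → ℝ) :=
    { toFun := fun u i => (u : EuclideanSpace ℝ (Fin d)) i.1
      map_add' := fun u v => by funext i; simp [PiLp.add_apply]
      map_smul' := fun c u => by funext i; simp [PiLp.smul_apply] }
  have hinj : Function.Injective φ := by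
    intro u v huv
    ext i
    by_cases hi : i ∈ S
    · exact congrFun huv ⟨i, hi⟩
    · rw [u.2 i hi, v.2 i hi]
  have := LinearMap.finrank_le_finrank_of_injective hinj
  rwa [Module.finrank_fintype_fun_eq_card, Fintype.card_coe] at this



/-- Projection of `x` onto the coordinates in `S` is the nearest point of the flat direction. -/
lemma norm_sub_proj_le (S : Finset (Fin d)) (x : EuclideanSpace ℝ (Fin d))
    {u : EuclideanSpace ℝ (Fin d)} (hu : u ∈ flat S)
    (xS : EuclideanSpace ℝ (Fin d)) (hxS : ∀ i, xS i = if i ∈ S then x i else 0) :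
    ‖u - xS‖ ≤ ‖u - x‖ := by
  rw [EuclideanSpace.norm_eq, EuclideanSpace.norm_eq]
  apply Real.sqrt_le_sqrt
  apply Finset.sum_le_sum
  intro i _
  by_cases hi : i ∈ S
  · simp [PiLp.sub_apply, hxS i, hi]
  · simp [PiLp.sub_apply, hxS i, hi, hu i hi]
    positivity

lemma cover_flat (S : Finset (Fin d)) (x : EuclideanSpace ℝ (Fin d)) {r : ℝ} (hr : 0 < r) :
    ∃ T : Finset (EuclideanSpace ℝ (Fin d)), T.card ≤ 5 ^ S.card ∧
      closedBall x (2 * r) ∩ {u | ∀ i ∉ S, u i = 0} ⊆ ⋃ y ∈ T, closedBall y r := by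
  classical
  set A : Set (EuclideanSpace ℝ (Fin d)) := closedBall x (2 * r) ∩ {u | ∀ i ∉ S, u i = 0} with hA
  set Ps : Set (Set (EuclideanSpace ℝ (Fin d))) := {P | P ⊆ A ∧ P.Pairwise fun u v => r ≤ dist u v} with hPs
  obtain ⟨P, hPmax⟩ : ∃ P, Maximal (· ∈ Ps) P := by
    apply zorn_subset
    intro c hc hchain
    refine ⟨⋃₀ c, ⟨?_, ?_⟩, fun s hs => subset_sUnion_of_mem hs⟩
    · exact sUnion_subset fun s hs => (hc hs).1
    · intro u hu v hv huv
      obtain ⟨s, hs, hus⟩ := hu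
      obtain ⟨t, ht, hvt⟩ := hv
      rcases hchain.total hs ht with h | h
      · exact (hc ht).2 (h hus) hvt huv
      · exact (hc hs).2 hus (h hvt) huv
  have hPA : P ⊆ A := hPmax.prop.1
  have hPsep := hPmax.prop.2
  -- the projection of x onto the flat
  set xS : EuclideanSpace ℝ (Fin d) := (WithLp.equiv 2 _).symm (fun i => if i ∈ S then x i else 0) with hxS
  have hxSapp : ∀ i, xS i = if i ∈ S then x i else 0 := fun i => rfl
  have hxSmem : xS ∈ flat S := fun i hi => by simp [hxSapp i, hi]
  -- any finset inside P has at most 5 ^ S.card elements (Besicovitch packing bound)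
  have cardF : ∀ F : Finset (EuclideanSpace ℝ (Fin d)), ↑F ⊆ P → F.card ≤ 5 ^ S.card := by
    intro F hF
    set g : EuclideanSpace ℝ (Fin d) → ↥(flat S) := fun u =>
      if h : u ∈ flat S then ⟨r⁻¹ • (u - xS), Submodule.smul_mem _ _
        (Submodule.sub_mem _ h hxSmem)⟩ else 0 with hg
    have hmemflat : ∀ u ∈ F, u ∈ flat S := fun u hu => (hPA (hF hu)).2
    have hmemball : ∀ u ∈ F, ‖u - x‖ ≤ 2 * r := by
      intro u hu
      have := (hPA (hF hu)).1
      rwa [mem_closedBall, dist_eq_norm] at this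
    have hgval : ∀ u ∈ F, (g u : EuclideanSpace ℝ (Fin d)) = r⁻¹ • (u - xS) := by
      intro u hu; rw [hg]; simp [hmemflat u hu]
    have hcard : (F.image g).card = F.card := by
      apply Finset.card_image_of_injOn
      intro u hu v hv huv
      have : (g u : EuclideanSpace ℝ (Fin d)) = (g v : EuclideanSpace ℝ (Fin d)) := by rw [huv]
      rw [hgval u hu, hgval v hv] at this
      have := smul_right_injective (EuclideanSpace ℝ (Fin d)) (inv_ne_zero hr.ne') this
      exact sub_left_injective this
    have hnorm : ∀ c ∈ F.image g, ‖c‖ ≤ 2 := by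
      intro c hc
      obtain ⟨u, hu, rfl⟩ := Finset.mem_image.1 hc
      have : ‖(g u : EuclideanSpace ℝ (Fin d))‖ ≤ 2 := by
        rw [hgval u hu, norm_smul, norm_inv, Real.norm_eq_abs, abs_of_pos hr]
        have h1 : ‖u - xS‖ ≤ 2 * r :=
          le_trans (norm_sub_proj_le S x (hmemflat u hu) xS hxSapp) (hmemball u hu)
        calc r⁻¹ * ‖u - xS‖ ≤ r⁻¹ * (2 * r) := by
              apply mul_le_mul_of_nonneg_left h1 (by positivity)
          _ = 2 := by field_simp
      exact this
    have hsep : ∀ c ∈ F.image g, ∀ c' ∈ F.image g, c ≠ c' → 1 ≤ ‖c - c'‖ := by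
      intro c hc c' hc' hne
      obtain ⟨u, hu, rfl⟩ := Finset.mem_image.1 hc
      obtain ⟨v, hv, rfl⟩ := Finset.mem_image.1 hc'
      have huv : u ≠ v := fun h => hne (by rw [h])
      have hdist : r ≤ dist u v := hPsep (hF hu) (hF hv) huv
      have : ‖(g u : EuclideanSpace ℝ (Fin d)) - (g v : EuclideanSpace ℝ (Fin d))‖ = r⁻¹ * ‖u - v‖ := by
        rw [hgval u hu, hgval v hv, ← smul_sub, norm_smul, norm_inv, Real.norm_eq_abs,
          abs_of_pos hr]
        congr 2
        abel
      have h2 : ‖g u - g v‖ = ‖(g u : EuclideanSpace ℝ (Fin d)) - (g v : EuclideanSpace ℝ (Fin d))‖ := rfl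
      rw [h2, this]
      rw [dist_eq_norm] at hdist
      calc (1 : ℝ) = r⁻¹ * r := by field_simp
        _ ≤ r⁻¹ * ‖u - v‖ := by
            apply mul_le_mul_of_nonneg_left hdist (by positivity)
    have := Besicovitch.card_le_of_separated (F.image g) hnorm hsep
    rw [hcard] at this
    exact this.trans (Nat.pow_le_pow_right (by norm_num) (finrank_flat_le S))
  -- P is finite
  have hPfin : P.Finite := by
    by_contra hinf
    have hPinf : P.Infinite := hinf
    obtain ⟨F, hFP, hFcard⟩ := hPinf.exists_subset_card_eq (5 ^ S.card + 1)
    have := cardF F hFP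
    omega
  refine ⟨hPfin.toFinset, ?_, ?_⟩
  · exact cardF _ (by simp)
  · intro a ha
    by_contra hcov
    simp only [mem_iUnion, Set.Finite.mem_toFinset, mem_closedBall] at hcov
    push_neg at hcov
    have haP : ∀ p ∈ P, r < dist a p := hcov
    have hanotP : a ∉ P := by
      intro h
      have := haP a h
      simp at this
      linarith
    have hins : insert a P ∈ Ps := by
      constructor
      · exact insert_subset ha hPA
      · apply hPsep.insert
        intro v hv hav
        constructor
        · exact (haP v hv).le
        · rw [dist_comm]; exact (haP v hv).le
    have := hPmax.2 hins (subset_insert a P)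
    exact hanotP (this (mem_insert a P))


lemma count_supports (d m : ℕ) (hd : 1 ≤ d) :
    ((Finset.univ.powerset.filter (fun S : Finset (Fin d) => S.card ≤ m)).card)
      ≤ (m + 1) * d ^ m := by
  classical
  have hsub : (Finset.univ.powerset.filter (fun S : Finset (Fin d) => S.card ≤ m)) ⊆
      (Finset.range (m + 1)).biUnion (fun k => Finset.univ.powersetCard k) := by
    intro S hS
    rw [Finset.mem_filter] at hS
    rw [Finset.mem_biUnion]
    exact ⟨S.card, Finset.mem_range.2 (Nat.lt_succ_of_le hS.2),
      Finset.mem_powersetCard_univ.2 rfl⟩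
  calc _ ≤ ((Finset.range (m + 1)).biUnion (fun k => Finset.univ.powersetCard k)).card :=
        Finset.card_le_card hsub
    _ ≤ ∑ k ∈ Finset.range (m + 1), (Finset.univ.powersetCard k : Finset (Finset (Fin d))).card :=
        Finset.card_biUnion_le
    _ ≤ ∑ k ∈ Finset.range (m + 1), d ^ m := by
        apply Finset.sum_le_sum
        intro k hk
        rw [Finset.card_powersetCard, Finset.card_univ, Fintype.card_fin]
        calc d.choose k ≤ d ^ k := Nat.choose_le_pow d k
          _ ≤ d ^ m := Nat.pow_le_pow_right hd (Nat.lt_succ_iff.1 (Finset.mem_range.1 hk))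
    _ = (m + 1) * d ^ m := by rw [Finset.sum_const, Finset.card_range, smul_eq_mul]

end Stmt7Aux

open scoped Classical in
/-- A collection of `n`-sparse vectors in `ℝ^d` has doubling dimension at most
`C n + n log₂ d` for a universal constant `C`. -/
theorem stmt7 :
    ∃ C : ℝ, 0 < C ∧
      ∀ (d n : ℕ) (X : Set (EuclideanSpace ℝ (Fin d))),
        (∀ u ∈ X, (Finset.univ.filter (fun i : Fin d => u i ≠ 0)).card ≤ n) →
        ∀ (x : EuclideanSpace ℝ (Fin d)) (r : ℝ), 0 < r →
          ∃ T : Finset (EuclideanSpace ℝ (Fin d)),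
            (T.card : ℝ) ≤ (2 : ℝ) ^ (C * n + n * Real.logb 2 d) ∧
            Metric.closedBall x (2 * r) ∩ X ⊆ ⋃ y ∈ T, Metric.closedBall y r := by
  classical
  refine ⟨4, by norm_num, ?_⟩
  intro d n X hX x r hr
  rcases Nat.eq_zero_or_pos d with hd | hd
  · -- degenerate case `d = 0` : the space is a single point
    subst hd
    refine ⟨{x}, ?_, ?_⟩
    · simp only [Finset.card_singleton, Nat.cast_zero, Real.logb_zero, mul_zero, add_zero,
        Nat.cast_one]
      calc (1 : ℝ) = (2 : ℝ) ^ (0 : ℝ) := by rw [Real.rpow_zero]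
        _ ≤ (2 : ℝ) ^ ((4 : ℝ) * n) := by
            apply Real.rpow_le_rpow_of_exponent_le (by norm_num)
            positivity
    · intro u hu
      have : u = x := Subsingleton.elim u x
      subst this
      simp only [Set.mem_iUnion, Finset.mem_singleton]
      exact ⟨u, rfl, Metric.mem_closedBall_self hr.le⟩
  -- main case `d ≥ 1`
  set m := min n d with hm
  choose T hTcard hTcov using fun S : Finset (Fin d) => Stmt7Aux.cover_flat S x hr
  set 𝒮 : Finset (Finset (Fin d)) :=
    Finset.univ.powerset.filter (fun S : Finset (Fin d) => S.card ≤ m) with h𝒮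
  refine ⟨𝒮.biUnion T, ?_, ?_⟩
  · -- cardinality bound
    have h1 : (𝒮.biUnion T).card ≤ 𝒮.card * 5 ^ m := by
      calc (𝒮.biUnion T).card ≤ ∑ S ∈ 𝒮, (T S).card := Finset.card_biUnion_le
        _ ≤ ∑ S ∈ 𝒮, 5 ^ m := by
            apply Finset.sum_le_sum
            intro S hS
            rw [h𝒮, Finset.mem_filter] at hS
            exact (hTcard S).trans (Nat.pow_le_pow_right (by norm_num) hS.2)
        _ = 𝒮.card * 5 ^ m := by rw [Finset.sum_const, smul_eq_mul]
    have h2 : (𝒮.biUnion T).card ≤ (16 * d) ^ n := by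
      have hc := Stmt7Aux.count_supports d m hd
      have h3 : (𝒮.biUnion T).card ≤ ((m + 1) * d ^ m) * 5 ^ m :=
        h1.trans (Nat.mul_le_mul_right _ hc)
      have h4 : (m + 1) ≤ 2 ^ m := Nat.succ_le_of_lt ((Nat.lt_two_pow_self (n := m)))
      have h5 : ((m + 1) * d ^ m) * 5 ^ m ≤ (2 ^ m * d ^ m) * 5 ^ m :=
        Nat.mul_le_mul_right _ (Nat.mul_le_mul_right _ h4)
      have h6 : (2 ^ m * d ^ m) * 5 ^ m = (10 * d) ^ m := by
        rw [show (10:ℕ) = 2 * 5 from rfl, mul_pow, mul_pow]; ring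
      have h7 : (10 * d) ^ m ≤ (16 * d) ^ m :=
        Nat.pow_le_pow_left (Nat.mul_le_mul_right _ (by norm_num)) m
      have h8 : (16 * d) ^ m ≤ (16 * d) ^ n :=
        Nat.pow_le_pow_right (by omega) (min_le_left n d)
      omega
    calc ((𝒮.biUnion T).card : ℝ) ≤ ((16 * d) ^ n : ℕ) := by exact_mod_cast h2
      _ = (16 : ℝ) ^ n * (d : ℝ) ^ n := by push_cast; rw [mul_pow]
      _ = (2 : ℝ) ^ ((4 : ℝ) * n + n * Real.logb 2 d) := by
          rw [Real.rpow_add (by norm_num : (0:ℝ) < 2)]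
          congr 1
          · have : (4 : ℝ) * n = ((4 * n : ℕ) : ℝ) := by push_cast; ring
            rw [this, Real.rpow_natCast, pow_mul]
            norm_num
          · rw [mul_comm (n : ℝ), Real.rpow_mul (by norm_num : (0:ℝ) ≤ 2),
              Real.rpow_logb (by norm_num) (by norm_num)
                (by exact_mod_cast hd : (0:ℝ) < d),
              Real.rpow_natCast]
  · -- covering property
    intro u hu
    obtain ⟨hu1, hu2⟩ := hu
    set S : Finset (Fin d) := Finset.univ.filter (fun i : Fin d => u i ≠ 0) with hS
    have hScard : S.card ≤ m := by
      refine le_min (hX u hu2) ?_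
      calc S.card ≤ (Finset.univ : Finset (Fin d)).card := Finset.card_le_card
            (Finset.filter_subset _ _)
        _ = d := by rw [Finset.card_univ, Fintype.card_fin]
    have hS𝒮 : S ∈ 𝒮 := by
      rw [h𝒮, Finset.mem_filter]
      exact ⟨Finset.mem_powerset.2 (Finset.subset_univ S), hScard⟩
    have humem : u ∈ Metric.closedBall x (2 * r) ∩ {v : EuclideanSpace ℝ (Fin d) |
        ∀ i ∉ S, v i = 0} := by
      refine ⟨hu1, fun i hi => ?_⟩
      rw [hS, Finset.mem_filter] at hi
      push_neg at hi
      exact hi (Finset.mem_univ i)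
    have := hTcov S humem
    rw [Set.mem_iUnion₂] at this
    obtain ⟨y, hy, hyball⟩ := this
    rw [Set.mem_iUnion₂]
    exact ⟨y, Finset.mem_biUnion.2 ⟨S, hS𝒮, hy⟩, hyball⟩
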